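/- The Witt-algebra module Ω(λ, a) = ℂ[t] with action L_α f(t) = λ^α(t - αa)f(t - α) is simple if and only if a ≠ 0. Moreover if a = 0, then (t)ℂ[t] (polynomials with zero constant term, identified via the submodule spanned by images of t) forms a proper nonzero submodule. -/

import Mathlib

open Polynomial

/-- The action of the Witt basis element `L_α` on `Ω(λ, a) = ℂ[t]`:
`L_α · f(t) = λ^α (t - αa) f(t - α)`. -/
noncomputable def wittL (lam a : ℂ) (α : ℤ) (f : Polynomial ℂ) : Polynomial ℂ :=
  lam ^ α • ((X - C ((α : ℂ) * a)) * f.comp (X - C (α : ℂ)))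

lemma binom_aux (j : ℕ) (x : ℂ) :
    ∑ i ∈ Finset.range j, (j.choose i : ℂ) * x ^ i = (x + 1) ^ j - x ^ j := by
  have h := add_pow x 1 j
  simp only [one_pow, mul_one] at h
  rw [Finset.sum_range_succ] at h
  simp only [Nat.choose_self, Nat.cast_one, mul_one] at h
  have : ∑ i ∈ Finset.range j, (j.choose i : ℂ) * x ^ i
      = ∑ i ∈ Finset.range j, x ^ i * (j.choose i : ℂ) := by
    exact Finset.sum_congr rfl fun i _ => by ring
  rw [this]
  rw [eq_sub_iff_add_eq, ← h]

lemma lemA {M : Type*} [AddCommGroup M] [Module ℂ M] (N : Submodule ℂ M) :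
    ∀ (d : ℕ) (v : ℕ → M),
      (∀ k : ℕ, (∑ j ∈ Finset.range (d + 1), ((k : ℂ) ^ j) • v j) ∈ N) →
      ((d.factorial : ℂ) • v d) ∈ N := by
  intro d
  induction d with
  | zero => intro v h; simpa using h 0
  | succ d ih =>
    intro v h
    set w : ℕ → M := fun i =>
      ∑ j ∈ Finset.range (d + 2), (if i < j then (j.choose i : ℂ) else 0) • v j with hw
    have hwk : ∀ k : ℕ, (∑ i ∈ Finset.range (d + 1), ((k : ℂ) ^ i) • w i) ∈ N := by
      intro k
      have key : (∑ i ∈ Finset.range (d + 1), ((k : ℂ) ^ i) • w i)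
          = (∑ j ∈ Finset.range (d + 2), (((k : ℂ) + 1) ^ j) • v j)
            - (∑ j ∈ Finset.range (d + 2), ((k : ℂ) ^ j) • v j) := by
      -- expand
        simp only [hw, Finset.smul_sum, smul_smul]
        rw [Finset.sum_comm, ← Finset.sum_sub_distrib]
        refine Finset.sum_congr rfl fun j hj => ?_
        rw [← Finset.sum_smul, ← sub_smul]
        congr 1
        have hj2 : j ≤ d + 1 := by simp only [Finset.mem_range] at hj; omega
        have step : ∑ i ∈ Finset.range (d + 1), (k : ℂ) ^ i * (if i < j then (j.choose i : ℂ) else 0)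
            = ∑ i ∈ Finset.range j, (j.choose i : ℂ) * (k : ℂ) ^ i := by
          rw [← Finset.sum_filter_add_sum_filter_not (Finset.range (d + 1)) (· < j)]
          have h2 : ∑ i ∈ (Finset.range (d + 1)).filter (fun i => ¬ i < j),
              (k : ℂ) ^ i * (if i < j then (j.choose i : ℂ) else 0) = 0 := by
            apply Finset.sum_eq_zero
            intro i hi
            simp only [Finset.mem_filter] at hi
            simp [hi.2]
          rw [h2, add_zero]
          have hset : (Finset.range (d + 1)).filter (fun i => i < j) = Finset.range j := by
            ext i
            simp only [Finset.mem_filter, Finset.mem_range]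
            omega
          rw [hset]
          refine Finset.sum_congr rfl fun i hi => ?_
          simp only [Finset.mem_range] at hi
          rw [if_pos hi]; ring
        rw [step, binom_aux]
      rw [key]
      have h1 := h (k + 1)
      push_cast at h1
      exact sub_mem h1 (h k)
    have hmem := ih w hwk
    have hwd : w d = ((d + 1 : ℕ) : ℂ) • v (d + 1) := by
      simp only [hw]
      rw [Finset.sum_eq_single (d + 1)]
      · simp
      · intro j hj hne
        have : ¬ d < j := by simp only [Finset.mem_range] at hj; omega
        simp [this]
      · intro hne; simp at hne
    rw [hwd, smul_smul] at hmem
    have hfac : ((d + 1).factorial : ℂ) = (d.factorial : ℂ) * ((d + 1 : ℕ) : ℂ) := by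
      rw [Nat.factorial_succ]; push_cast; ring
    rw [hfac]
    exact hmem

noncomputable def Fpoly (a : ℂ) (f : Polynomial ℂ) : Polynomial (Polynomial ℂ) :=
  (C X - C (C a) * X) * (f.map C).comp (C X - X)

lemma Fpoly_eval (a : ℂ) (f : Polynomial ℂ) (z : ℂ) :
    (Fpoly a f).eval (C z) = (X - C (z * a)) * f.comp (X - C z) := by
  unfold Fpoly
  rw [eval_mul, eval_comp]
  simp only [eval_sub, eval_C, eval_mul, eval_X]
  congr 1
  · rw [mul_comm z a, ← C_mul]
  · rw [eval_map]
    rfl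

lemma Fpoly_coeff_top (a : ℂ) (ha : a ≠ 0) (f : Polynomial ℂ) (hf : f ≠ 0) :
    (Fpoly a f).coeff (f.natDegree + 1)
      = C ((-1) ^ (f.natDegree + 1) * a * f.leadingCoeff) ∧
    (Fpoly a f).natDegree = f.natDegree + 1 := by
  set n := f.natDegree with hn
  have hq : (C X - X : Polynomial (Polynomial ℂ)).natDegree = 1 := by
    have : (C X - X : Polynomial (Polynomial ℂ)) = C (-1) * X + C X := by
      rw [C_neg, C_1]; ring
    rw [this, natDegree_linear]
    simp
  have hqlc : (C X - X : Polynomial (Polynomial ℂ)).leadingCoeff = -1 := by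
    have : (C X - X : Polynomial (Polynomial ℂ)) = C (-1) * X + C X := by
      rw [C_neg, C_1]; ring
    rw [this, leadingCoeff_linear]
    simp
  have hmapdeg : (f.map (C : ℂ →+* Polynomial ℂ)).natDegree = n := by
    rw [natDegree_map_eq_of_injective C_injective]
  have hmaplc : (f.map (C : ℂ →+* Polynomial ℂ)).leadingCoeff = C f.leadingCoeff := by
    rw [leadingCoeff, hmapdeg, coeff_map]; rfl
  have h1deg : ((f.map C).comp (C X - X)).natDegree = n := by
    rw [natDegree_comp, hmapdeg, hq, mul_one]
  have h1lc : ((f.map C).comp (C X - X)).leadingCoeff = C ((-1) ^ n * f.leadingCoeff) := by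
    rw [leadingCoeff_comp (by rw [hq]; exact one_ne_zero), hmaplc, hqlc, hmapdeg]
    rw [C_mul, C_pow, C_neg, C_1]
    ring
  have h0 : (C X - C (C a) * X : Polynomial (Polynomial ℂ)) = C (-(C a)) * X + C X := by
    rw [C_neg]; ring
  have h0deg : (C X - C (C a) * X : Polynomial (Polynomial ℂ)).natDegree = 1 := by
    rw [h0, natDegree_linear]
    simp [ha]
  have h0lc : (C X - C (C a) * X : Polynomial (Polynomial ℂ)).leadingCoeff = -(C a) := by
    rw [h0, leadingCoeff_linear]
    simp [ha]
  have hp1ne : (f.map C).comp (C X - X) ≠ 0 := by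
    have hCne : (C ((-1 : ℂ) ^ n * f.leadingCoeff) : Polynomial ℂ) ≠ 0 := by
      simp only [ne_eq, C_eq_zero, mul_eq_zero, not_or]
      exact ⟨pow_ne_zero _ (by norm_num), leadingCoeff_ne_zero.mpr hf⟩
    intro h
    rw [h, leadingCoeff_zero] at h1lc
    exact hCne h1lc.symm
  have hp0ne : (C X - C (C a) * X : Polynomial (Polynomial ℂ)) ≠ 0 := by
    intro h
    rw [h] at h0deg
    simp at h0deg
  have hFdeg : (Fpoly a f).natDegree = n + 1 := by
    unfold Fpoly
    rw [natDegree_mul hp0ne hp1ne, h0deg, h1deg]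
    ring
  constructor
  · have : (Fpoly a f).coeff (n + 1) = (Fpoly a f).leadingCoeff := by
      rw [leadingCoeff, hFdeg]
    rw [this]
    unfold Fpoly
    rw [leadingCoeff_mul, h0lc, h1lc]
    rw [← C_neg, ← C_mul]
    congr 1
    ring
  · exact hFdeg


/-- The Witt module `Ω(λ, a)` is simple iff `a ≠ 0`; moreover, if `a = 0` then the
polynomials with zero constant term form a proper nonzero submodule. -/
theorem Omega_simple_iff (lam a : ℂ) (hlam : lam ≠ 0) :
    ((∀ N : Submodule ℂ (Polynomial ℂ),
        (∀ (α : ℤ) (f : Polynomial ℂ), f ∈ N → wittL lam a α f ∈ N) → N = ⊥ ∨ N = ⊤) ↔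
      a ≠ 0) ∧
    (a = 0 →
      LinearMap.ker (lcoeff ℂ 0) ≠ ⊥ ∧ LinearMap.ker (lcoeff ℂ 0) ≠ ⊤ ∧
      ∀ (α : ℤ) (f : Polynomial ℂ), f ∈ LinearMap.ker (lcoeff ℂ 0) →
        wittL lam a α f ∈ LinearMap.ker (lcoeff ℂ 0)) := by
  have part2 : a = 0 →
      LinearMap.ker (lcoeff ℂ 0) ≠ ⊥ ∧ LinearMap.ker (lcoeff ℂ 0) ≠ ⊤ ∧
      ∀ (α : ℤ) (f : Polynomial ℂ), f ∈ LinearMap.ker (lcoeff ℂ 0) →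
        wittL lam a α f ∈ LinearMap.ker (lcoeff ℂ 0) := by
    intro ha0
    subst ha0
    refine ⟨?_, ?_, ?_⟩
    · intro h
      have hX : (X : Polynomial ℂ) ∈ LinearMap.ker (lcoeff ℂ 0) := by
        simp [LinearMap.mem_ker, lcoeff_apply, coeff_X_zero]
      rw [h, Submodule.mem_bot] at hX
      exact X_ne_zero hX
    · intro h
      have h1 : (1 : Polynomial ℂ) ∈ LinearMap.ker (lcoeff ℂ 0) := by rw [h]; trivial
      simp [LinearMap.mem_ker, lcoeff_apply] at h1
    · intro α f hf
      simp only [LinearMap.mem_ker, lcoeff_apply]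
      have hw : wittL lam 0 α f = lam ^ α • (X * f.comp (X - C (α : ℂ))) := by
        unfold wittL
        norm_num
      rw [hw, coeff_smul, mul_coeff_zero, coeff_X_zero, zero_mul, smul_zero]
  have hard : a ≠ 0 → ∀ N : Submodule ℂ (Polynomial ℂ),
      (∀ (α : ℤ) (f : Polynomial ℂ), f ∈ N → wittL lam a α f ∈ N) → N = ⊥ ∨ N = ⊤ := by
    intro ha N hN
    by_cases hbot : N = ⊥
    · exact Or.inl hbot
    right
    obtain ⟨f, hfN, hf0⟩ := Submodule.exists_mem_ne_zero_of_ne_bot hbot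
    set n := f.natDegree with hn
    have hu : ∀ k : ℕ,
        (∑ j ∈ Finset.range (n + 1 + 1), ((k : ℂ) ^ j) • (Fpoly a f).coeff j) ∈ N := by
      intro k
      have h1 : wittL lam a (k : ℤ) f ∈ N := hN _ _ hfN
      have h2 : ((lam ^ (k : ℤ))⁻¹) • wittL lam a (k : ℤ) f ∈ N := Submodule.smul_mem _ _ h1
      have h3 : ((lam ^ (k : ℤ))⁻¹) • wittL lam a (k : ℤ) f = (Fpoly a f).eval (C (k : ℂ)) := by
        unfold wittL
        rw [inv_smul_smul₀ (zpow_ne_zero _ hlam), Fpoly_eval]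
        push_cast
        ring
      have h4 : (Fpoly a f).eval (C (k : ℂ))
          = ∑ j ∈ Finset.range (n + 1 + 1), ((k : ℂ) ^ j) • (Fpoly a f).coeff j := by
        rw [eval_eq_sum_range' (n := n + 1 + 1) (by rw [(Fpoly_coeff_top a ha f hf0).2, hn]; omega)]
        refine Finset.sum_congr rfl fun j _ => ?_
        rw [smul_eq_C_mul, C_pow, mul_comm]
      rw [h3, h4] at h2
      exact h2
    have hmem := lemA N (n + 1) (fun j => (Fpoly a f).coeff j) hu
    obtain ⟨hcoeff, _⟩ := Fpoly_coeff_top a ha f hf0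
    rw [← hn] at hcoeff
    simp only [hcoeff] at hmem
    set b := (-1 : ℂ) ^ (n + 1) * a * f.leadingCoeff with hb
    have hbne : b ≠ 0 :=
      mul_ne_zero (mul_ne_zero (pow_ne_zero _ (by norm_num)) ha) (leadingCoeff_ne_zero.mpr hf0)
    have hfacne : ((n + 1).factorial : ℂ) ≠ 0 := Nat.cast_ne_zero.mpr (Nat.factorial_ne_zero _)
    have hone : (1 : Polynomial ℂ) ∈ N := by
      have hsm := Submodule.smul_mem N ((((n + 1).factorial : ℂ) * b)⁻¹) hmem
      have he : ((((n + 1).factorial : ℂ) * b)⁻¹) • (((n + 1).factorial : ℂ) • (C b : Polynomial ℂ))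
          = 1 := by
        have hCb : (C b : Polynomial ℂ) = b • (1 : Polynomial ℂ) := by
          rw [smul_eq_C_mul, mul_one]
        rw [hCb, smul_smul, smul_smul]
        rw [show ((((n + 1).factorial : ℂ) * b)⁻¹ * ((n + 1).factorial : ℂ)) * b = 1 from by
          field_simp]
        rw [one_smul]
      rwa [he] at hsm
    have hX : ∀ k : ℕ, (X : Polynomial ℂ) ^ k ∈ N := by
      intro k
      induction k with
      | zero => simpa using hone
      | succ k ih =>
        have h1 := hN 0 _ ih
        have h2 : wittL lam a 0 ((X : Polynomial ℂ) ^ k) = X ^ (k + 1) := by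
          unfold wittL
          norm_num
          rw [pow_succ, mul_comm]
        rwa [h2] at h1
    rw [Submodule.eq_top_iff']
    intro p
    induction p using Polynomial.induction_on' with
    | add p q hp hq => exact Submodule.add_mem N hp hq
    | monomial m c =>
      have hm : (monomial m c : Polynomial ℂ) = c • X ^ m := by
        rw [smul_eq_C_mul, C_mul_X_pow_eq_monomial]
      rw [hm]
      exact Submodule.smul_mem N c (hX m)
  refine ⟨⟨fun hsimp ha0 => ?_, hard⟩, part2⟩
  obtain ⟨hne1, hne2, hinv⟩ := part2 ha0
  rcases hsimp _ hinv with h | h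
  · exact hne1 h
  · exact hne2 h
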